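/- arXiv:2105.01025 — 2 statements merged into one kernel-verified Lean document; each statement's English description precedes it below -/
import Mathlib

section
/- Let 𝖪_0, …, 𝖪_3 and 𝖠_0, …, 𝖠_3 be matrices in M_m(ℂ), define the operators 𝔡_μ = {𝖪_μ + 𝖠_μ, ·}_{e_μ} on M_m(ℂ), set 𝔉_{μν} = [𝔡_μ, 𝔡_ν] and θ = Σ_{μ,ν} η^{μν} 𝔡_μ ∘ 𝔡_ν. Then, as operators on ℂ^k ⊗ M_m(ℂ): ( Σ_μ γ^μ ⊗ 𝔡_μ )² = (1/2) Σ_{μ,ν} γ^μ γ^ν ⊗ 𝔉_{μν} + 1_k ⊗ θ. (Paper: Proposition 4.6, the flat Weitzenböck formula for Yang-Mills gauge matrix spectral triples.) -/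
open Matrix

noncomputable section

/-- The operator `g ⊗ T` on `ℂ^k ⊗ M_m(ℂ) ≅ (Fin k → M_m(ℂ))`. -/
def matOp {k : ℕ} {V : Type*} [AddCommGroup V] [Module ℂ V]
    (g : Matrix (Fin k) (Fin k) ℂ) (T : Module.End ℂ V) :
    Module.End ℂ (Fin k → V) where
  toFun f i := ∑ j, g i j • T (f j)
  map_add' f h := by
    funext i
    simp [map_add, smul_add, Finset.sum_add_distrib]
  map_smul' c f := by
    funext i
    simp only [Pi.smul_apply, _root_.map_smul, RingHom.id_apply]
    rw [Finset.smul_sum]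
    exact Finset.sum_congr rfl fun j _ => smul_comm _ _ _

/-- The generalized (anti-)commutator `{M, ·}_e : T ↦ M T + e T M`. -/
def brkt {m : ℕ} (M : Matrix (Fin m) (Fin m) ℂ) (e : ℂ) :
    Module.End ℂ (Matrix (Fin m) (Fin m) ℂ) :=
  LinearMap.mulLeft ℂ M + e • LinearMap.mulRight ℂ M


section Helpers
variable {k : ℕ} {V : Type*} [AddCommGroup V] [Module ℂ V]

lemma matOp_apply (g : Matrix (Fin k) (Fin k) ℂ) (T : Module.End ℂ V)
    (f : Fin k → V) (i : Fin k) : matOp g T f i = ∑ j, g i j • T (f j) := rfl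

lemma matOp_mul (g g' : Matrix (Fin k) (Fin k) ℂ) (T T' : Module.End ℂ V) :
    matOp g T * matOp g' T' = matOp (g * g') (T * T') := by
  apply LinearMap.ext; intro f; funext i
  simp only [Module.End.mul_apply, matOp_apply, map_sum, _root_.map_smul,
    Finset.smul_sum, smul_smul]
  rw [Finset.sum_comm]
  refine Finset.sum_congr rfl fun j _ => ?_
  rw [← Finset.sum_smul, Matrix.mul_apply]

lemma matOp_add_left (g g' : Matrix (Fin k) (Fin k) ℂ) (T : Module.End ℂ V) :
    matOp (g + g') T = matOp g T + matOp g' T := by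
  apply LinearMap.ext; intro f; funext i
  simp [matOp_apply, add_smul, Finset.sum_add_distrib]

lemma matOp_smul_left (c : ℂ) (g : Matrix (Fin k) (Fin k) ℂ) (T : Module.End ℂ V) :
    matOp (c • g) T = c • matOp g T := by
  apply LinearMap.ext; intro f; funext i
  simp [matOp_apply, Finset.smul_sum, smul_smul]

lemma matOp_smul_right (c : ℂ) (g : Matrix (Fin k) (Fin k) ℂ) (T : Module.End ℂ V) :
    matOp g (c • T) = c • matOp g T := by
  apply LinearMap.ext; intro f; funext i
  simp [matOp_apply, Finset.smul_sum, smul_smul, mul_comm]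

lemma matOp_sub_right (g : Matrix (Fin k) (Fin k) ℂ) (T T' : Module.End ℂ V) :
    matOp g (T - T') = matOp g T - matOp g T' := by
  apply LinearMap.ext; intro f; funext i
  simp [matOp_apply, smul_sub, Finset.sum_sub_distrib]

lemma matOp_sum_right {ι : Type*} (s : Finset ι) (g : Matrix (Fin k) (Fin k) ℂ)
    (T : ι → Module.End ℂ V) :
    matOp g (∑ x ∈ s, T x) = ∑ x ∈ s, matOp g (T x) := by
  apply LinearMap.ext; intro f; funext i
  simp [matOp_apply, Finset.smul_sum]
  rw [Finset.sum_comm]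

end Helpers

theorem stmt7 (p q k m : ℕ) (hpq : p + q = 4) (hk : 1 ≤ k) (hm : 1 ≤ m)
    (e : Fin 4 → ℂ) (he : ∀ μ, e μ = if (μ : ℕ) < p then 1 else -1)
    (γ : Fin 4 → Matrix (Fin k) (Fin k) ℂ)
    (hCl : ∀ μ ν, γ μ * γ ν + γ ν * γ μ =
      (2 * if μ = ν then e μ else 0) • (1 : Matrix (Fin k) (Fin k) ℂ))
    (hAdj : ∀ μ, (γ μ)ᴴ = e μ • γ μ)
    (K A : Fin 4 → Matrix (Fin m) (Fin m) ℂ)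
    (dop : Fin 4 → Module.End ℂ (Matrix (Fin m) (Fin m) ℂ))
    (hdop : ∀ μ, dop μ = brkt (K μ + A μ) (e μ))
    (F : Fin 4 → Fin 4 → Module.End ℂ (Matrix (Fin m) (Fin m) ℂ))
    (hF : ∀ μ ν, F μ ν = dop μ * dop ν - dop ν * dop μ)
    (θ : Module.End ℂ (Matrix (Fin m) (Fin m) ℂ))
    (hθ : θ = ∑ μ, ∑ ν, (if μ = ν then e μ else 0) • (dop μ * dop ν)) :
    (∑ μ, matOp (γ μ) (dop μ)) * (∑ μ, matOp (γ μ) (dop μ)) =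
      (1 / 2 : ℂ) • (∑ μ, ∑ ν, matOp (γ μ * γ ν) (F μ ν)) + matOp 1 θ := by
  rw [Finset.sum_mul_sum]
  simp only [matOp_mul]
  have hFm : ∀ μ ν : Fin 4, matOp (γ μ * γ ν) (F μ ν)
      = matOp (γ μ * γ ν) (dop μ * dop ν) - matOp (γ μ * γ ν) (dop ν * dop μ) := by
    intro μ ν; rw [hF, matOp_sub_right]
  simp only [hFm, Finset.sum_sub_distrib]
  set a := ∑ μ : Fin 4, ∑ ν : Fin 4, matOp (γ μ * γ ν) (dop μ * dop ν) with ha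
  set b := ∑ μ : Fin 4, ∑ ν : Fin 4, matOp (γ μ * γ ν) (dop ν * dop μ) with hb
  have hb' : b = ∑ μ : Fin 4, ∑ ν : Fin 4, matOp (γ ν * γ μ) (dop μ * dop ν) := by
    rw [hb, Finset.sum_comm]
  have key : a + b = (2 : ℂ) • matOp 1 θ := by
    rw [ha, hb', hθ]
    simp only [← Finset.sum_add_distrib, matOp_sum_right, matOp_smul_right,
      Finset.smul_sum, smul_smul]
    refine Finset.sum_congr rfl fun μ _ => Finset.sum_congr rfl fun ν _ => ?_
    rw [← matOp_add_left, hCl, matOp_smul_left]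
  have hc : matOp 1 θ = (1 / 2 : ℂ) • (a + b) := by
    rw [key, smul_smul]; norm_num
  rw [hc]
  module
end
end

section
/- Let γ_{ch} ∈ M_k(ℂ) be self-adjoint with γ_{ch}² = 1_k, let ε'' ∈ {+1, −1}, and assume C γ_{ch} = ε'' γ_{ch} C. Let D_F ∈ M_n(ℂ) be self-adjoint and let D_H be the operator on H with D_H(v⊗Y⊗ψ) = γ_{ch} v ⊗ Y ⊗ (D_F ψ). Let ω_F = Σ_j ρ(W_j⊗a_j) ∘ ( D_H ∘ ρ(T_j⊗c_j) − ρ(T_j⊗c_j) ∘ D_H ) be a finite sum with W_j, T_j ∈ M_N(ℂ), a_j, c_j ∈ M_n(ℂ), assume ω_F is self-adjoint, and set φ = Σ_j (W_j T_j) ⊗ ( a_j (D_F c_j − c_j D_F) ) ∈ M_{Nn}(ℂ). Then φ* = φ, and for all v, Y, ψ: (ω_F + J∘ω_F∘J^{−1})(v⊗Y⊗ψ) = γ_{ch} v ⊗ φ·(Y⊗ψ) + ε'' · γ_{ch} v ⊗ (Y⊗ψ)·φ, where Y⊗ψ ∈ M_{Nn}(ℂ) and · is matrix multiplication. (Paper: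 Proposition 6.1, the inner fluctuations of the Dirac operator along the finite geometry F.) -/
open Matrix
open scoped Kronecker

noncomputable section
set_option linter.unusedSectionVars false
set_option linter.unusedVariables false
set_option linter.unusedTactic false
set_option maxHeartbeats 1000000

/-- The pure tensor `v ⊗ M` in `ℂ^k ⊗ M_{Nn}(ℂ) ≅ (Fin k → M_{Nn}(ℂ))`. -/
def pt {k : ℕ} {ι : Type*} (v : Fin k → ℂ) (M : Matrix ι ι ℂ) :
    Fin k → Matrix ι ι ℂ :=
  fun i => v i • M

/-- The representation `ρ(P)` acting by left multiplication by `P` on the matrix factor. -/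
def rho {k : ℕ} {ι : Type*} [Fintype ι] (P : Matrix ι ι ℂ) :
    Module.End ℂ (Fin k → Matrix ι ι ℂ) :=
  (LinearMap.mulLeft ℂ P).compLeft (Fin k)

/-- The inner product `⟨v⊗Y⊗ψ, w⊗Z⊗χ⟩ = ⟨v,w⟩ Tr(Y*Z) Tr(ψ*χ)` on
`H = ℂ^k ⊗ M_N(ℂ) ⊗ M_n(ℂ) ≅ (Fin k → M_{Nn}(ℂ))`. -/
def inn {k : ℕ} {ι : Type*} [Fintype ι] (f g : Fin k → Matrix ι ι ℂ) : ℂ :=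
  ∑ i, Matrix.trace ((f i)ᴴ * g i)

section Aux
variable {k : ℕ} {ι : Type*} [Fintype ι] [DecidableEq ι]

lemma rho_pt (P M : Matrix ι ι ℂ) (v : Fin k → ℂ) :
    (rho P : Module.End ℂ (Fin k → Matrix ι ι ℂ)) (pt v M) = pt v (P * M) := by
  funext i
  simp [rho, pt, LinearMap.compLeft, Matrix.mul_smul, LinearMap.coe_mk, AddHom.coe_mk]
  exact Matrix.mul_smul P (v i) M

lemma pt_sub (v : Fin k → ℂ) (A B : Matrix ι ι ℂ) :
    pt v A - pt v B = pt v (A - B) := by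
  funext i; simp [pt, smul_sub]

lemma pt_sum {r : ℕ} (v : Fin k → ℂ) (M : Fin r → Matrix ι ι ℂ) :
    pt v (∑ j, M j) = ∑ j, pt v (M j) := by
  funext i; simp [pt, Finset.smul_sum]

lemma pt_smul (c : ℂ) (v : Fin k → ℂ) (M : Matrix ι ι ℂ) :
    pt (c • v) M = c • pt v M := by
  funext i; simp [pt, smul_smul]

lemma inn_pt_pt (v w : Fin k → ℂ) (A B : Matrix ι ι ℂ) :
    inn (pt v A) (pt w B) = (star v ⬝ᵥ w) * Matrix.trace (Aᴴ * B) := by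
  simp [inn, pt, Matrix.conjTranspose_smul, Matrix.smul_mul, Matrix.mul_smul,
    dotProduct, Finset.sum_mul, mul_assoc, mul_comm, mul_left_comm]
  rw [Finset.mul_sum]
  exact Finset.sum_congr rfl fun _ _ => by ring

lemma kron_std {ι' : Type*} [DecidableEq ι'] (i j : ι) (i' j' : ι') :
    (Matrix.single i j (1:ℂ)) ⊗ₖ (Matrix.single i' j' (1:ℂ)) =
      Matrix.single (i,i') (j,j') (1:ℂ) := by
  ext ⟨p,q⟩ ⟨p',q'⟩
  simp [Matrix.single, Prod.ext_iff, ite_and]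
  aesop

lemma trace_std_pick (A : Matrix ι ι ℂ) (p q p' : ι) :
    Matrix.trace ((Matrix.single p q (1:ℂ))ᴴ * (A * Matrix.single p' q (1:ℂ))) = A p p' := by
  have : (Matrix.single p q (1:ℂ))ᴴ = Matrix.single q p 1 := by
    ext i j; simp [Matrix.single, Matrix.conjTranspose_apply, and_comm]
  rw [this]
  simp [Matrix.trace, Matrix.mul_apply, Matrix.single, Matrix.diag,
    Finset.sum_mul, Finset.mul_sum, ite_and]

lemma kron_sub {κ : Type*} (A : Matrix ι ι ℂ) (B C : Matrix κ κ ℂ) :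
    A ⊗ₖ (B - C) = A ⊗ₖ B - A ⊗ₖ C := by
  ext ⟨i,j⟩ ⟨i',j'⟩
  simp [Matrix.kroneckerMap_apply, mul_sub]

lemma kron_conjT {κ : Type*} (A : Matrix ι ι ℂ) (B : Matrix κ κ ℂ) :
    (A ⊗ₖ B)ᴴ = Aᴴ ⊗ₖ Bᴴ := by
  ext ⟨i,j⟩ ⟨i',j'⟩
  simp [Matrix.kroneckerMap_apply, Matrix.conjTranspose_apply, mul_comm]

end Aux

theorem stmt14 (k N n : ℕ) (hk : 1 ≤ k) (hN : 1 ≤ N) (hn : 1 ≤ n)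
    -- the chirality `γ_ch`, self-adjoint with square one
    (γch : Matrix (Fin k) (Fin k) ℂ)
    (hγchsa : γchᴴ = γch) (hγch2 : γch * γch = 1)
    (ε : ℂ) (hε : ε = 1 ∨ ε = -1)
    -- the charge conjugation `C`: a conjugate-linear bijection with `C γ_ch = ε'' γ_ch C`
    (C : (Fin k → ℂ) ≃ (Fin k → ℂ))
    (hCadd : ∀ v w, C (v + w) = C v + C w)
    (hCsmul : ∀ (c : ℂ) v, C (c • v) = (starRingEnd ℂ c) • C v)
    (hCγch : ∀ v, C (γch.mulVec v) = ε • γch.mulVec (C v))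
    -- the finite Dirac operator `D_F`, self-adjoint
    (DF : Matrix (Fin n) (Fin n) ℂ) (hDF : DFᴴ = DF)
    -- the operator `D_H` with `D_H(v⊗Y⊗ψ) = γ_ch v ⊗ Y ⊗ (D_F ψ)`
    (DH : Module.End ℂ (Fin k → Matrix (Fin N × Fin n) (Fin N × Fin n) ℂ))
    (hDH : ∀ (v : Fin k → ℂ) (Y : Matrix (Fin N) (Fin N) ℂ) (ψ : Matrix (Fin n) (Fin n) ℂ),
      DH (pt v (Y ⊗ₖ ψ)) = pt (γch.mulVec v) (Y ⊗ₖ (DF * ψ)))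
    -- the real structure `J`
    (J : (Fin k → Matrix (Fin N × Fin n) (Fin N × Fin n) ℂ) ≃
      (Fin k → Matrix (Fin N × Fin n) (Fin N × Fin n) ℂ))
    (hJadd : ∀ f g, J (f + g) = J f + J g)
    (hJsmul : ∀ (c : ℂ) f, J (c • f) = (starRingEnd ℂ c) • J f)
    (hJ : ∀ (v : Fin k → ℂ) (Y : Matrix (Fin N) (Fin N) ℂ) (ψ : Matrix (Fin n) (Fin n) ℂ),
      J (pt v (Y ⊗ₖ ψ)) = pt (C v) (Yᴴ ⊗ₖ ψᴴ))
    -- the Connes one-form `ω_F`, assumed self-adjoint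
    (r : ℕ) (W T : Fin r → Matrix (Fin N) (Fin N) ℂ)
    (a c : Fin r → Matrix (Fin n) (Fin n) ℂ)
    (ωF : Module.End ℂ (Fin k → Matrix (Fin N × Fin n) (Fin N × Fin n) ℂ))
    (hωF : ωF = ∑ j, rho (W j ⊗ₖ a j) *
      (DH * rho (T j ⊗ₖ c j) - rho (T j ⊗ₖ c j) * DH))
    (hsa : ∀ f g, inn (ωF f) g = inn f (ωF g))
    -- the field `φ`
    (φ : Matrix (Fin N × Fin n) (Fin N × Fin n) ℂ)
    (hφ : φ = ∑ j, (W j * T j) ⊗ₖ (a j * (DF * c j - c j * DF))) :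
    φᴴ = φ ∧
    ∀ (v : Fin k → ℂ) (Y : Matrix (Fin N) (Fin N) ℂ) (ψ : Matrix (Fin n) (Fin n) ℂ),
      ωF (pt v (Y ⊗ₖ ψ)) + J (ωF (J.symm (pt v (Y ⊗ₖ ψ)))) =
        pt (γch.mulVec v) (φ * (Y ⊗ₖ ψ)) +
          ε • pt (γch.mulVec v) ((Y ⊗ₖ ψ) * φ) := by
  have key : ∀ (v : Fin k → ℂ) (Y : Matrix (Fin N) (Fin N) ℂ) (ψ : Matrix (Fin n) (Fin n) ℂ),
      ωF (pt v (Y ⊗ₖ ψ)) = pt (γch.mulVec v) (φ * (Y ⊗ₖ ψ)) := by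
    intro v Y ψ
    rw [hωF, hφ, LinearMap.sum_apply, Finset.sum_mul, pt_sum]
    refine Finset.sum_congr rfl fun j _ => ?_
    have h1 : (rho ((T j) ⊗ₖ (c j)) : Module.End ℂ _) (pt v (Y ⊗ₖ ψ)) =
        pt v ((T j * Y) ⊗ₖ (c j * ψ)) := by rw [rho_pt, ← mul_kronecker_mul]
    have h4 : (rho ((T j) ⊗ₖ (c j)) : Module.End ℂ _)
        (pt (γch.mulVec v) (Y ⊗ₖ (DF * ψ))) =
        pt (γch.mulVec v) ((T j * Y) ⊗ₖ (c j * (DF * ψ))) := by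
      rw [rho_pt, ← mul_kronecker_mul]
    simp only [Module.End.mul_apply, LinearMap.sub_apply, map_sub]
    rw [h1, hDH, hDH, h4, rho_pt, rho_pt, pt_sub]
    congr 1
    rw [← mul_kronecker_mul, ← mul_kronecker_mul, ← kron_sub, ← mul_kronecker_mul]
    have e1 : W j * (T j * Y) = W j * T j * Y := by rw [Matrix.mul_assoc]
    have e2 : a j * (DF * (c j * ψ)) - a j * (c j * (DF * ψ)) =
        a j * (DF * c j - c j * DF) * ψ := by noncomm_ring
    rw [e1, e2]
  -- φ is hermitian
  have hherm : φᴴ = φ := by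
    have i0 : Fin k := ⟨0, hk⟩
    set e : Fin k → ℂ := Pi.single i0 1 with he_def
    have he : star e ⬝ᵥ e = 1 := by
      simp [he_def, dotProduct, Pi.single_apply, apply_ite]
    have hγe : star (γch.mulVec e) ⬝ᵥ (γch.mulVec e) = 1 := by
      rw [Matrix.star_mulVec, Matrix.dotProduct_mulVec, Matrix.vecMul_vecMul,
        hγchsa, hγch2, Matrix.vecMul_one]
      exact he
    have hsq : γch.mulVec (γch.mulVec e) = e := by
      rw [Matrix.mulVec_mulVec, hγch2, Matrix.one_mulVec]
    ext p p'
    have h := hsa (pt e ((Matrix.single p.1 p.1 (1:ℂ)) ⊗ₖ (Matrix.single p.2 p.2 (1:ℂ))))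
      (pt (γch.mulVec e) ((Matrix.single p'.1 p.1 (1:ℂ)) ⊗ₖ (Matrix.single p'.2 p.2 (1:ℂ))))
    rw [key, key, hsq, inn_pt_pt, inn_pt_pt, hγe, he, one_mul, one_mul,
      kron_std, kron_std, Matrix.conjTranspose_mul, Matrix.mul_assoc, trace_std_pick] at h
    rw [trace_std_pick] at h
    simpa using h
  refine ⟨hherm, ?_⟩
  -- J is additive over sums
  have hJ0 : J 0 = 0 := by
    have h := hJadd 0 0
    rw [add_zero] at h
    have h2 : J 0 + J 0 = J 0 + 0 := by rw [add_zero]; exact h.symm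
    exact (add_left_cancel h2)
  have hJsum : ∀ {r' : ℕ} (f : Fin r' → (Fin k → Matrix (Fin N × Fin n) (Fin N × Fin n) ℂ)),
      J (∑ j, f j) = ∑ j, J (f j) := by
    intro r' f
    classical
    induction (Finset.univ : Finset (Fin r')) using Finset.induction with
    | empty => simpa using hJ0
    | insert _ _ hnot ih => rw [Finset.sum_insert hnot, hJadd, ih, Finset.sum_insert hnot]
  have hJsymm : ∀ (v : Fin k → ℂ) (Y : Matrix (Fin N) (Fin N) ℂ) (ψ : Matrix (Fin n) (Fin n) ℂ),
      J.symm (pt v (Y ⊗ₖ ψ)) = pt (C.symm v) (Yᴴ ⊗ₖ ψᴴ) := by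
    intro v Y ψ
    rw [Equiv.symm_apply_eq, hJ, Equiv.apply_symm_apply, Matrix.conjTranspose_conjTranspose,
      Matrix.conjTranspose_conjTranspose]
  intro v Y ψ
  rw [key, hJsymm, key]
  congr 1
  have expand : φ * (Yᴴ ⊗ₖ ψᴴ) =
      ∑ j, (W j * T j * Yᴴ) ⊗ₖ ((a j * (DF * c j - c j * DF)) * ψᴴ) := by
    rw [hφ, Finset.sum_mul]
    exact Finset.sum_congr rfl fun j _ => (mul_kronecker_mul _ _ _ _).symm
  rw [expand, pt_sum, hJsum]
  simp only [hJ]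
  rw [hCγch, Equiv.apply_symm_apply]
  simp only [pt_smul]
  rw [← Finset.smul_sum, ← pt_sum]
  have hM : (∑ j, (W j * T j * Yᴴ)ᴴ ⊗ₖ ((a j * (DF * c j - c j * DF)) * ψᴴ)ᴴ) =
      (Y ⊗ₖ ψ) * φ := by
    calc ∑ j, (W j * T j * Yᴴ)ᴴ ⊗ₖ ((a j * (DF * c j - c j * DF)) * ψᴴ)ᴴ
        = ∑ j, ((W j * T j * Yᴴ) ⊗ₖ ((a j * (DF * c j - c j * DF)) * ψᴴ))ᴴ :=
          Finset.sum_congr rfl fun j _ => (kron_conjT _ _).symm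
      _ = (∑ j, (W j * T j * Yᴴ) ⊗ₖ ((a j * (DF * c j - c j * DF)) * ψᴴ))ᴴ := by
        rw [Matrix.conjTranspose_sum]
      _ = (φ * (Yᴴ ⊗ₖ ψᴴ))ᴴ := by rw [← expand]
      _ = (Yᴴ ⊗ₖ ψᴴ)ᴴ * φᴴ := by rw [Matrix.conjTranspose_mul]
      _ = (Y ⊗ₖ ψ) * φ := by
        rw [kron_conjT, Matrix.conjTranspose_conjTranspose,
          Matrix.conjTranspose_conjTranspose, hherm]
  rw [hM]
end
end
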